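/- Let K be the cyclic nilpotent Leibniz algebra of dimension n with basis a_1, ..., a_n as above, and let g be a right derivation of K. Then g(a_2) = g(a_3) = ... = g(a_n) = 0. -/

import Mathlib

/-- Let `K` be the cyclic nilpotent Leibniz algebra with basis `a ⟨0, by omega⟩, …, a (n-1)`
(representing `a_1, …, a_n`) as above. Any right derivation `g` of `K` vanishes on
`a_2, …, a_n`. -/
theorem right_derivation_of_cyclic_nilpotent
    {F : Type*} [Field F] {L : Type*} [AddCommGroup L] [Module F L]
    {n : ℕ} (hn : 2 ≤ n)
    (a : Module.Basis (Fin n) F L)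
    (br : L →ₗ[F] L →ₗ[F] L)
    (hleib : ∀ x y z : L, br (br x y) z = br x (br y z) - br y (br x z))
    (hsucc : ∀ j : Fin n, ∀ h : j.val + 1 < n, br (a ⟨0, by omega⟩) (a j) = a ⟨j.val + 1, h⟩)
    (hlast : ∀ j : Fin n, j.val + 1 = n → br (a ⟨0, by omega⟩) (a j) = 0)
    (habel : ∀ i j : Fin n, i.val ≠ 0 → br (a i) (a j) = 0)
    (g : L →ₗ[F] L)
    (hg : ∀ x y : L, g (br x y) = br x (g y) - br y (g x)) :
    ∀ k : Fin n, 1 ≤ k.val → g (a k) = 0 := by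
  -- any basis vector with nonzero index left-multiplies everything to zero
  have hzero : ∀ i : Fin n, i.val ≠ 0 → ∀ x : L, br (a i) x = 0 := by
    intro i hi x
    have h : br (a i) = 0 := by
      apply a.ext
      intro j
      simpa using habel i j hi
    rw [h]; rfl
  suffices H : ∀ m : ℕ, ∀ h : m < n, 1 ≤ m → g (a ⟨m, h⟩) = 0 by
    intro k hk
    have := H k.val k.isLt hk
    simpa using this
  intro m
  induction m with
  | zero => intro _ h; omega
  | succ p ih =>
    intro h _
    rcases Nat.eq_zero_or_pos p with hp | hp
    · subst hp
      have h2 := hsucc ⟨0, by omega⟩ (by simpa using h)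
      rw [show a ⟨0 + 1, by simpa using h⟩ = a ⟨1, h⟩ from rfl] at h2
      rw [← h2, hg]
      simp
    · have hlt : p < n := by omega
      have h2 := hsucc ⟨p, hlt⟩ (by simpa using h)
      rw [show a ⟨p + 1, by simpa using h⟩ = a ⟨p + 1, h⟩ from rfl] at h2
      rw [← h2, hg, ih hlt hp, hzero ⟨p, hlt⟩ (show p ≠ 0 by omega)]
      simp
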